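/- Every k-partite graph with n vertices that is a TRVG has at most 2(k−1)n − k(k−1) edges. -/

import Mathlib

structure Rect where
  x1 : ℝ
  x2 : ℝ
  y1 : ℝ
  y2 : ℝ
  hx : x1 < x2
  hy : y1 < y2

def Rect.pts (R : Rect) : Set (ℝ × ℝ) := Set.Icc R.x1 R.x2 ×ˢ Set.Icc R.y1 R.y2

def seesV (R S : Rect) : Prop := (Set.Ioo R.x1 R.x2 ∩ Set.Ioo S.x1 S.x2).Nonempty

def seesH (R S : Rect) : Prop := (Set.Ioo R.y1 R.y2 ∩ Set.Ioo S.y1 S.y2).Nonempty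

def sees (R S : Rect) : Prop := seesV R S ∨ seesH R S

def IsTRVG {V : Type*} (G : SimpleGraph V) : Prop :=
  ∃ f : V → Rect,
    (∀ u v : V, u ≠ v → Disjoint (f u).pts (f v).pts) ∧
    (∀ u v : V, u ≠ v → (G.Adj u v ↔ sees (f u) (f v)))

open Finset

lemma sum_rank {α β : Type*} [DecidableEq α] [LinearOrder β] (F : ℕ → ℕ) (key : α → β) :
    ∀ s : Finset α, Set.InjOn key s →
      ∑ v ∈ s, F ((s.filter (fun u => key u < key v)).card) = ∑ i ∈ Finset.range s.card, F i := by
  intro s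
  induction s using Finset.strongInduction with
  | _ s ih =>
    intro hinj
    rcases s.eq_empty_or_nonempty with rfl | hs
    · simp
    obtain ⟨m, hm, hmax⟩ := s.exists_max_image key hs
    have herase : s.filter (fun u => key u < key m) = s.erase m := by
      ext u
      simp only [mem_filter, mem_erase]
      constructor
      · rintro ⟨hu, hlt⟩
        exact ⟨fun h => absurd hlt (by simp [h]), hu⟩
      · rintro ⟨hne, hu⟩
        exact ⟨hu, lt_of_le_of_ne (hmax u hu) fun h => hne (hinj hu hm h)⟩
    have hinj' : Set.InjOn key (s.erase m) := hinj.mono (by exact_mod_cast (erase_subset m s))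
    have hfilter : ∀ v ∈ s.erase m,
        s.filter (fun u => key u < key v) = (s.erase m).filter (fun u => key u < key v) := by
      intro v hv
      ext u
      simp only [mem_filter, mem_erase]
      constructor
      · rintro ⟨hu, hlt⟩
        refine ⟨⟨fun h => ?_, hu⟩, hlt⟩
        subst h
        exact absurd (hmax v (mem_of_mem_erase hv)) (not_le.2 hlt)
      · rintro ⟨⟨_, hu⟩, hlt⟩
        exact ⟨hu, hlt⟩
    obtain ⟨c, hc⟩ : ∃ c, s.card = c + 1 := ⟨s.card - 1, (Nat.succ_pred_eq_of_pos (card_pos.2 hs)).symm⟩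
    have hce : (s.erase m).card = c := by rw [card_erase_of_mem hm, hc]; rfl
    rw [← Finset.sum_erase_add s _ hm, herase, card_erase_of_mem hm, hc]
    have : ∑ v ∈ s.erase m, F ((s.filter (fun u => key u < key v)).card)
        = ∑ v ∈ s.erase m, F (((s.erase m).filter (fun u => key u < key v)).card) := by
      apply Finset.sum_congr rfl
      intro v hv
      rw [hfilter v hv]
    rw [this, ih (s.erase m) (erase_ssubset hm) hinj', hce, Finset.sum_range_succ]
    simp

lemma sum_min_eq (k : ℕ) : ∀ n, k ≤ n →
    2 * (∑ i ∈ Finset.range n, min (k-1) i) + k*(k-1) = 2*(k-1)*n := by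
  intro n hn
  induction n, hn using Nat.le_induction with
  | base =>
    have h1 : ∑ i ∈ Finset.range k, min (k-1) i = ∑ i ∈ Finset.range k, i := by
      apply Finset.sum_congr rfl
      intro i hi
      have := mem_range.1 hi
      exact min_eq_right (by omega)
    rw [h1]
    have h2 : (∑ i ∈ Finset.range k, i) * 2 = k * (k-1) := Finset.sum_range_id_mul_two k
    have h3 : 2 * (∑ i ∈ Finset.range k, i) = k * (k-1) := by rw [mul_comm]; exact h2
    rw [h3]; ring
  | succ n hn ih =>
    rw [Finset.sum_range_succ, min_eq_left (by omega)]
    have h1 : 2*((∑ i ∈ Finset.range n, min (k-1) i) + (k-1)) + k*(k-1)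
        = (2*(∑ i ∈ Finset.range n, min (k-1) i) + k*(k-1)) + 2*(k-1) := by ring
    rw [h1, ih, Nat.mul_succ]


lemma seesV_symm {R S : Rect} (h : seesV R S) : seesV S R := by
  obtain ⟨a, h1, h2⟩ := h; exact ⟨a, h2, h1⟩

lemma seesH_symm {R S : Rect} (h : seesH R S) : seesH S R := by
  obtain ⟨a, h1, h2⟩ := h; exact ⟨a, h2, h1⟩

lemma not_seesV_and_seesH {R S : Rect} (hd : Disjoint R.pts S.pts) :
    ¬ (seesV R S ∧ seesH R S) := by
  rintro ⟨⟨a, haR, haS⟩, ⟨b, hbR, hbS⟩⟩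
  have h1 : (a, b) ∈ R.pts :=
    ⟨⟨le_of_lt haR.1, le_of_lt haR.2⟩, ⟨le_of_lt hbR.1, le_of_lt hbR.2⟩⟩
  have h2 : (a, b) ∈ S.pts :=
    ⟨⟨le_of_lt haS.1, le_of_lt haS.2⟩, ⟨le_of_lt hbS.1, le_of_lt hbS.2⟩⟩
  exact Set.disjoint_left.1 hd h1 h2

/-- Every k-partite TRVG with n vertices has at most 2(k−1)n − k(k−1) edges. -/
theorem stmt5 {V : Type*} [Fintype V] (G : SimpleGraph V) (k n : ℕ)
    (hn : Fintype.card V = n)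
    (part : V → Fin k) (hpart : ∀ u v : V, G.Adj u v → part u ≠ part v)
    (hsurj : Function.Surjective part)
    (h : IsTRVG G) :
    G.edgeSet.ncard ≤ 2 * (k - 1) * n - k * (k - 1) := by
  classical
  obtain ⟨f, hdisj, hadj⟩ := h
  have hkn : k ≤ n := by
    have := Fintype.card_le_of_surjective part hsurj
    rw [Fintype.card_fin] at this
    omega
  set g : V → ℕ := fun v => (Fintype.equivFin V v : ℕ) with hg
  have hginj : Function.Injective g := fun u v huv => by
    exact (Fintype.equivFin V).injective (Fin.val_injective huv)
  set keyx : V → ℝ ×ₗ ℕ := fun v => toLex ((f v).x1, g v) with hkeyx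
  set keyy : V → ℝ ×ₗ ℕ := fun v => toLex ((f v).y1, g v) with hkeyy
  have hkeyxinj : Function.Injective keyx := fun u v huv => by
    have := congrArg (fun p => (ofLex p).2) huv
    exact hginj this
  have hkeyyinj : Function.Injective keyy := fun u v huv => by
    have := congrArg (fun p => (ofLex p).2) huv
    exact hginj this
  have hkx_le : ∀ u v : V, keyx u < keyx v → (f u).x1 ≤ (f v).x1 := by
    intro u v huv
    rcases Prod.Lex.lt_iff.1 huv with h1 | h1
    · exact le_of_lt h1
    · exact le_of_eq h1.1
  have hky_le : ∀ u v : V, keyy u < keyy v → (f u).y1 ≤ (f v).y1 := by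
    intro u v huv
    rcases Prod.Lex.lt_iff.1 huv with h1 | h1
    · exact le_of_lt h1
    · exact le_of_eq h1.1
  -- the set of charged ordered pairs
  set D : Finset (V × V) := univ.filter (fun p =>
      G.Adj p.1 p.2 ∧ ((seesV (f p.1) (f p.2) ∧ keyx p.1 < keyx p.2) ∨
        (seesH (f p.1) (f p.2) ∧ keyy p.1 < keyy p.2))) with hD
  -- edge count equals |D|
  have hcard : G.edgeSet.ncard = D.card := by
    rw [Set.ncard_eq_toFinset_card']
    refine (Finset.card_bij (fun p _ => s(p.1, p.2)) ?_ ?_ ?_).symm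
    · intro p hp
      rw [hD, mem_filter] at hp
      simpa [Set.mem_toFinset] using hp.2.1
    · rintro ⟨u1, u2⟩ h1 ⟨w1, w2⟩ h2 heq
      rw [hD, mem_filter] at h1 h2
      rw [Sym2.eq_iff] at heq
      rcases heq with ⟨rfl, rfl⟩ | ⟨rfl, rfl⟩
      · rfl
      · exfalso
        have hne := (h1.2.1).ne
        rcases h1.2.2 with ⟨hs1, hl1⟩ | ⟨hs1, hl1⟩ <;>
          rcases h2.2.2 with ⟨hs2, hl2⟩ | ⟨hs2, hl2⟩
        · exact absurd hl2 (not_lt.2 (le_of_lt hl1))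
        · exact not_seesV_and_seesH (hdisj _ _ hne) ⟨hs1, seesH_symm hs2⟩
        · exact not_seesV_and_seesH (hdisj _ _ hne) ⟨seesV_symm hs2, hs1⟩
        · exact absurd hl2 (not_lt.2 (le_of_lt hl1))
    · intro e he
      rw [Set.mem_toFinset] at he
      induction e with
      | _ u v =>
        rw [SimpleGraph.mem_edgeSet] at he
        have hne : u ≠ v := he.ne
        rcases (hadj u v hne).1 he with hs | hs
        · rcases lt_or_gt_of_ne (fun hc => hne (hkeyxinj hc)) with hlt | hlt
          · exact ⟨(u, v), by rw [hD, mem_filter]; exact ⟨mem_univ _, he, Or.inl ⟨hs, hlt⟩⟩, rfl⟩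
          · refine ⟨(v, u), ?_, Sym2.eq_swap⟩
            rw [hD, mem_filter]
            exact ⟨mem_univ _, he.symm, Or.inl ⟨seesV_symm hs, hlt⟩⟩
        · rcases lt_or_gt_of_ne (fun hc => hne (hkeyyinj hc)) with hlt | hlt
          · exact ⟨(u, v), by rw [hD, mem_filter]; exact ⟨mem_univ _, he, Or.inr ⟨hs, hlt⟩⟩, rfl⟩
          · refine ⟨(v, u), ?_, Sym2.eq_swap⟩
            rw [hD, mem_filter]
            exact ⟨mem_univ _, he.symm, Or.inr ⟨seesH_symm hs, hlt⟩⟩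
  -- fiberwise counting
  have hfiber : D.card = ∑ v : V, (D.filter (fun p => p.2 = v)).card :=
    Finset.card_eq_sum_card_fiberwise (fun x _ => mem_univ x.2)
  -- per-vertex sets
  set Ax : V → Finset V := fun v => univ.filter (fun u =>
      G.Adj u v ∧ seesV (f u) (f v) ∧ keyx u < keyx v) with hAx
  set Ay : V → Finset V := fun v => univ.filter (fun u =>
      G.Adj u v ∧ seesH (f u) (f v) ∧ keyy u < keyy v) with hAy
  have hfibsub : ∀ v : V, (D.filter (fun p => p.2 = v)).card ≤ (Ax v).card + (Ay v).card := by
    intro v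
    have hsub : D.filter (fun p => p.2 = v) ⊆ (Ax v ∪ Ay v).image (fun u => (u, v)) := by
      intro p hp
      rw [mem_filter, hD, mem_filter] at hp
      obtain ⟨⟨-, hadj2, hor⟩, hp2⟩ := hp
      rw [mem_image]
      refine ⟨p.1, ?_, by rw [← hp2]⟩
      rw [mem_union, hAx, hAy, mem_filter, mem_filter]
      rw [hp2] at hadj2 hor
      rcases hor with ⟨h1, h2⟩ | ⟨h1, h2⟩
      · exact Or.inl ⟨mem_univ _, hadj2, h1, h2⟩
      · exact Or.inr ⟨mem_univ _, hadj2, h1, h2⟩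
    calc (D.filter (fun p => p.2 = v)).card
        ≤ ((Ax v ∪ Ay v).image (fun u => (u, v))).card := Finset.card_le_card hsub
      _ ≤ (Ax v ∪ Ay v).card := Finset.card_image_le
      _ ≤ (Ax v).card + (Ay v).card := Finset.card_union_le _ _
  -- clique bound
  have hAxk : ∀ v : V, (Ax v).card + 1 ≤ k := by
    intro v
    have hvnot : v ∉ Ax v := by
      rw [hAx, mem_filter]
      rintro ⟨-, -, -, hlt⟩
      exact lt_irrefl _ hlt
    have hclique : ∀ a ∈ Ax v, ∀ b ∈ Ax v, a ≠ b → G.Adj a b := by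
      intro a ha b hb hab
      rw [hAx, mem_filter] at ha hb
      obtain ⟨-, -, hsa, hla⟩ := ha
      obtain ⟨-, -, hsb, hlb⟩ := hb
      refine (hadj a b hab).2 (Or.inl ?_)
      obtain ⟨t1, ht1a, ht1v⟩ := hsa
      obtain ⟨t2, ht2b, ht2v⟩ := hsb
      simp only [Set.mem_Ioo] at ht1a ht1v ht2b ht2v
      have h1 : (f a).x1 ≤ (f v).x1 := hkx_le a v hla
      have h2 : (f b).x1 ≤ (f v).x1 := hkx_le b v hlb
      have h3 : (f v).x1 < (f a).x2 := lt_trans ht1v.1 ht1a.2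
      have h4 : (f v).x1 < (f b).x2 := lt_trans ht2v.1 ht2b.2
      have hma : min (f a).x2 (f b).x2 ≤ (f a).x2 := min_le_left _ _
      have hmb : min (f a).x2 (f b).x2 ≤ (f b).x2 := min_le_right _ _
      have hlt : (f v).x1 < min (f a).x2 (f b).x2 := lt_min h3 h4
      refine ⟨((f v).x1 + min (f a).x2 (f b).x2)/2, ⟨?_, ?_⟩, ?_, ?_⟩ <;> linarith
    have hinjOn : Set.InjOn part ((insert v (Ax v) : Finset V) : Set V) := by
      intro a ha b hb hab
      simp only [coe_insert, Set.mem_insert_iff, mem_coe] at ha hb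
      by_contra hne
      rcases ha with rfl | ha <;> rcases hb with rfl | hb
      · exact hne rfl
      · have : G.Adj b a := by
          rw [hAx, mem_filter] at hb
          exact hb.2.1
        exact hpart b a this hab.symm
      · have : G.Adj a b := by
          rw [hAx, mem_filter] at ha
          exact ha.2.1
        exact hpart a b this hab
      · exact hpart a b (hclique a ha b hb hne) hab
    have := Finset.card_le_card_of_injOn part (fun a _ => mem_univ (part a)) hinjOn
    rw [Finset.card_insert_of_notMem hvnot, card_univ, Fintype.card_fin] at this
    exact this
  have hAyk : ∀ v : V, (Ay v).card + 1 ≤ k := by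
    intro v
    have hvnot : v ∉ Ay v := by
      rw [hAy, mem_filter]
      rintro ⟨-, -, -, hlt⟩
      exact lt_irrefl _ hlt
    have hclique : ∀ a ∈ Ay v, ∀ b ∈ Ay v, a ≠ b → G.Adj a b := by
      intro a ha b hb hab
      rw [hAy, mem_filter] at ha hb
      obtain ⟨-, -, hsa, hla⟩ := ha
      obtain ⟨-, -, hsb, hlb⟩ := hb
      refine (hadj a b hab).2 (Or.inr ?_)
      obtain ⟨t1, ht1a, ht1v⟩ := hsa
      obtain ⟨t2, ht2b, ht2v⟩ := hsb
      simp only [Set.mem_Ioo] at ht1a ht1v ht2b ht2v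
      have h1 : (f a).y1 ≤ (f v).y1 := hky_le a v hla
      have h2 : (f b).y1 ≤ (f v).y1 := hky_le b v hlb
      have h3 : (f v).y1 < (f a).y2 := lt_trans ht1v.1 ht1a.2
      have h4 : (f v).y1 < (f b).y2 := lt_trans ht2v.1 ht2b.2
      have hma : min (f a).y2 (f b).y2 ≤ (f a).y2 := min_le_left _ _
      have hmb : min (f a).y2 (f b).y2 ≤ (f b).y2 := min_le_right _ _
      have hlt : (f v).y1 < min (f a).y2 (f b).y2 := lt_min h3 h4
      refine ⟨((f v).y1 + min (f a).y2 (f b).y2)/2, ⟨?_, ?_⟩, ?_, ?_⟩ <;> linarith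
    have hinjOn : Set.InjOn part ((insert v (Ay v) : Finset V) : Set V) := by
      intro a ha b hb hab
      simp only [coe_insert, Set.mem_insert_iff, mem_coe] at ha hb
      by_contra hne
      rcases ha with rfl | ha <;> rcases hb with rfl | hb
      · exact hne rfl
      · have : G.Adj b a := by
          rw [hAy, mem_filter] at hb
          exact hb.2.1
        exact hpart b a this hab.symm
      · have : G.Adj a b := by
          rw [hAy, mem_filter] at ha
          exact ha.2.1
        exact hpart a b this hab
      · exact hpart a b (hclique a ha b hb hne) hab
    have := Finset.card_le_card_of_injOn part (fun a _ => mem_univ (part a)) hinjOn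
    rw [Finset.card_insert_of_notMem hvnot, card_univ, Fintype.card_fin] at this
    exact this
  -- rank bounds
  have hAxrank : ∀ v : V, (Ax v).card ≤ (univ.filter (fun u => keyx u < keyx v)).card := by
    intro v
    apply Finset.card_le_card
    intro u hu
    rw [hAx, mem_filter] at hu
    rw [mem_filter]
    exact ⟨mem_univ _, hu.2.2.2⟩
  have hAyrank : ∀ v : V, (Ay v).card ≤ (univ.filter (fun u => keyy u < keyy v)).card := by
    intro v
    apply Finset.card_le_card
    intro u hu
    rw [hAy, mem_filter] at hu
    rw [mem_filter]
    exact ⟨mem_univ _, hu.2.2.2⟩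
  have hAxmin : ∀ v : V, (Ax v).card ≤
      min (k-1) ((univ.filter (fun u => keyx u < keyx v)).card) := by
    intro v
    exact le_min (by have := hAxk v; omega) (hAxrank v)
  have hAymin : ∀ v : V, (Ay v).card ≤
      min (k-1) ((univ.filter (fun u => keyy u < keyy v)).card) := by
    intro v
    exact le_min (by have := hAyk v; omega) (hAyrank v)
  -- sum of ranks
  have hsumx : ∑ v : V, min (k-1) ((univ.filter (fun u => keyx u < keyx v)).card)
      = ∑ i ∈ Finset.range n, min (k-1) i := by
    have := sum_rank (fun i => min (k-1) i) keyx univ (hkeyxinj.injOn)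
    rw [card_univ, hn] at this
    exact this
  have hsumy : ∑ v : V, min (k-1) ((univ.filter (fun u => keyy u < keyy v)).card)
      = ∑ i ∈ Finset.range n, min (k-1) i := by
    have := sum_rank (fun i => min (k-1) i) keyy univ (hkeyyinj.injOn)
    rw [card_univ, hn] at this
    exact this
  -- combine
  have hbound : G.edgeSet.ncard ≤ 2 * (∑ i ∈ Finset.range n, min (k-1) i) := by
    rw [hcard, hfiber]
    calc ∑ v : V, (D.filter (fun p => p.2 = v)).card
        ≤ ∑ v : V, (min (k-1) ((univ.filter (fun u => keyx u < keyx v)).card)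
            + min (k-1) ((univ.filter (fun u => keyy u < keyy v)).card)) := by
          apply Finset.sum_le_sum
          intro v _
          calc (D.filter (fun p => p.2 = v)).card ≤ (Ax v).card + (Ay v).card := hfibsub v
            _ ≤ _ := Nat.add_le_add (hAxmin v) (hAymin v)
      _ = 2 * (∑ i ∈ Finset.range n, min (k-1) i) := by
          rw [Finset.sum_add_distrib, hsumx, hsumy]; ring
  have heq := sum_min_eq k n hkn
  omega
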